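/- Let G be a finite abelian group with free Brauer action on a Brauer graph (Γ, 𝔬, m), let W be the successor weighting on the orbit graph Γ̄ associated to this action, let μ be a vertex of Γ with successor sequence of an incident edge i of the form i = i₁,…,i_k, i₁^g,…,i_k^g, …, i₁^{g^s},…,i_k^{g^s}. Then: (1) g = ω_{μ̄}; (2) the order of ω_{μ̄} equals s+1; (3) ord(μ̄) divides m̄(μ̄); (4) for h, h' ∈ G, μ^h = μ^{h'} if and only if h(h')^{-1} ∈ ⟨ω_{μ̄}⟩; (5) the index of ⟨ω_{μ̄}⟩ in G equals the number of vertices in the G-orbit of μ. -/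

import Mathlib

/-- A Brauer graph `(Γ, 𝔬, m)`, presented via half-edges: `H` is the (finite, nonempty)
set of half-edges, `σ` is the successor permutation whose cycle at a vertex lists the
incident half-edges in the cyclic order `𝔬` (a loop contributes two half-edges, i.e. is
"listed twice"), `ι` is the fixed-point-free involution pairing the two half-edges of
each edge, `v` assigns to each half-edge its vertex (so the fibres of `v` are exactly
the cycles of `σ`), the graph is connected, and `m` is the multiplicity function. -/
structure BrauerGraph where
  H : Type
  V : Type
  fintypeH : Fintype H
  decEqH : DecidableEq H
  fintypeV : Fintype V
  decEqV : DecidableEq V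
  nonemptyH : Nonempty H
  σ : Equiv.Perm H
  ι : Equiv.Perm H
  ι_invol : ∀ h, ι (ι h) = h
  ι_ne : ∀ h, ι h ≠ h
  v : H → V
  v_surj : Function.Surjective v
  v_eq_iff : ∀ h h', v h = v h' ↔ ∃ n : ℤ, (σ ^ n) h = h'
  connected : ∀ h h' : H, ∃ g ∈ Subgroup.closure ({σ, ι} : Set (Equiv.Perm H)), g h = h'
  m : V → ℕ
  m_pos : ∀ μ, 0 < m μ

attribute [instance] BrauerGraph.fintypeH BrauerGraph.decEqH
attribute [instance] BrauerGraph.fintypeV BrauerGraph.decEqV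

namespace BrauerGraph

variable (Γ : BrauerGraph)

/-- The valency of a vertex: the number of incident half-edges (loops counted twice). -/
noncomputable def val (μ : Γ.V) : ℕ := Nat.card {h : Γ.H // Γ.v h = μ}

end BrauerGraph

/-- A Brauer action of a group `G` on a Brauer graph: a faithful action on half-edges
commuting with the successor permutation (i.e. orientation/successor preserving) and
with the edge involution (i.e. an action by graph automorphisms), and preserving the
multiplicity function. -/
structure BrauerAction (G : Type) [Group G] (Γ : BrauerGraph) where
  e : G →* Equiv.Perm Γ.H
  faithful : Function.Injective e
  comm_σ : ∀ g h, e g (Γ.σ h) = Γ.σ (e g h)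
  comm_ι : ∀ g h, e g (Γ.ι h) = Γ.ι (e g h)
  m_inv : ∀ g h, Γ.m (Γ.v (e g h)) = Γ.m (Γ.v h)

namespace BrauerAction

variable {G : Type} [Group G] {Γ : BrauerGraph}

/-- A free Brauer action: the action is free on the set of edges (loops counted twice,
i.e. on half-edges). -/
def IsFree (A : BrauerAction G Γ) : Prop := ∀ (g : G) (h : Γ.H), A.e g h = h → g = 1

/-- The orbit equivalence relation of the action on half-edges. -/
def orbSetoid (A : BrauerAction G Γ) : Setoid Γ.H where
  r h h' := ∃ g : G, A.e g h = h'
  iseqv := by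
    refine ⟨fun h => ⟨1, by simp⟩, ?_, ?_⟩
    · rintro h h' ⟨g, hg⟩
      exact ⟨g⁻¹, by rw [← hg, ← Equiv.Perm.mul_apply, ← map_mul]; simp⟩
    · rintro a b c ⟨g₁, hg₁⟩ ⟨g₂, hg₂⟩
      exact ⟨g₂ * g₁, by rw [map_mul, Equiv.Perm.mul_apply, hg₁, hg₂]⟩

/-- The orbit equivalence relation of the action restricted to a subset of half-edges. -/
def subOrbSetoid (A : BrauerAction G Γ) (P : Γ.H → Prop) : Setoid {h : Γ.H // P h} where
  r p q := ∃ g : G, A.e g p.1 = q.1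
  iseqv := by
    refine ⟨fun p => ⟨1, by simp⟩, ?_, ?_⟩
    · rintro p q ⟨g, hg⟩
      exact ⟨g⁻¹, by rw [← hg, ← Equiv.Perm.mul_apply, ← map_mul]; simp⟩
    · rintro a b c ⟨g₁, hg₁⟩ ⟨g₂, hg₂⟩
      exact ⟨g₂ * g₁, by rw [map_mul, Equiv.Perm.mul_apply, hg₁, hg₂]⟩

/-- The induced action of `g ∈ G` on vertices (defined via a chosen half-edge
in the fibre of the vertex). -/
noncomputable def vmap (A : BrauerAction G Γ) (g : G) (μ : Γ.V) : Γ.V :=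
  Γ.v (A.e g (Γ.v_surj μ).choose)

/-- The valency, in the orbit graph `Γ/G`, of the orbit vertex `μ̄` of `μ`: the number
of `G`-orbits of half-edges incident with a vertex in the orbit of `μ`. -/
noncomputable def orbVal (A : BrauerAction G Γ) (μ : Γ.V) : ℕ :=
  Nat.card (Quotient (A.subOrbSetoid (fun h => ∃ a : G, Γ.v (A.e a h) = μ)))

/-- The multiplicity function `m̄(μ̄) = val(μ)·m(μ)/val(μ̄)` of the orbit graph,
expressed on representatives. -/
noncomputable def mbar (A : BrauerAction G Γ) (μ : Γ.V) : ℕ :=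
  Γ.val μ * Γ.m μ / A.orbVal μ

end BrauerAction

namespace BrauerGraph

variable (Γ : BrauerGraph) {G : Type} [CommGroup G]

/-- `ω_μ`: the product of the values of a successor weighting `W` over all successor
pairs at the vertex `μ` (a successor pair `(i, σ i)` is identified with the half-edge
`i`). -/
noncomputable def omega (W : Γ.H → G) (μ : Γ.V) : G :=
  ∏ h ∈ Finset.univ.filter (fun h => Γ.v h = μ), W h

/-- `ω(i₁, i_{r+1})`: the product of the weights along the first `r` steps of the
successor sequence of the half-edge `h`. -/
noncomputable def wpath (W : Γ.H → G) (h : Γ.H) (r : ℕ) : G :=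
  ∏ t ∈ Finset.range r, W ((Γ.σ ^ t) h)

/-- The generating relation for the equivalence classes `[i, H_{μ,s}]` defining the
vertices of the Brauer covering graph `Δ_W`: a pair `(i, g)` (representing the pair of
`i` and the coset `H_{v i}·g`) is related to `(σ i, g·W(i))`, and to `(i, g·ω_{v i})`
(the latter identifies representatives of the same coset of `H_μ = ⟨ω_μ⟩`). -/
def covRel (W : Γ.H → G) : Γ.H × G → Γ.H × G → Prop := fun p q =>
  (q.1 = Γ.σ p.1 ∧ q.2 = p.2 * W p.1) ∨ (q.1 = p.1 ∧ q.2 = p.2 * Γ.omega W (Γ.v p.1))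

end BrauerGraph

namespace BrauerAction

variable {G : Type} [Group G] {Γ : BrauerGraph}

lemma e_comm_zpow (A : BrauerAction G Γ) (a : G) (n : ℤ) (x : Γ.H) :
    A.e a ((Γ.σ ^ n) x) = (Γ.σ ^ n) (A.e a x) := by
  have hc : A.e a * Γ.σ = Γ.σ * A.e a := Equiv.ext fun y => by
    simp only [Equiv.Perm.mul_apply]; exact A.comm_σ a y
  have h2 : A.e a * Γ.σ ^ n = Γ.σ ^ n * A.e a := Commute.zpow_right hc n
  calc A.e a ((Γ.σ ^ n) x) = (A.e a * Γ.σ ^ n) x := rfl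
    _ = (Γ.σ ^ n * A.e a) x := by rw [h2]
    _ = (Γ.σ ^ n) (A.e a x) := rfl

lemma e_comm_pow (A : BrauerAction G Γ) (a : G) (n : ℕ) (x : Γ.H) :
    A.e a ((Γ.σ ^ n) x) = (Γ.σ ^ n) (A.e a x) := by
  have := A.e_comm_zpow a (n : ℤ) x
  rwa [zpow_natCast] at this

end BrauerAction

/-- Let `G` be a finite abelian group with a free Brauer action on a
Brauer graph `(Γ, 𝔬, m)` and let `W` be the successor weighting on the orbit graph
`Γ̄` associated to the action (defined, via a choice `rep` of orbit representatives,
by `A.e (W q) (rep(successor-orbit)) = σ (rep q)`).  If the vertex `μ = v h` has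
successor sequence of the form `h,…,σ^{k-1}h, h^g,…, h^{g^s},…,(σ^{k-1}h)^{g^s}`
(i.e. `k = val(μ̄)`, `σ^k h = h^g`, `val(μ) = k(s+1)`), then, with
`ω_{μ̄} = W(h̄₁)···W(h̄_k)`: (1) `g = ω_{μ̄}`; (2) `ord(ω_{μ̄}) = s+1`;
(3) `ord(μ̄) ∣ m̄(μ̄)`; (4) `μ^a = μ^{a'}` iff `a·a'⁻¹ ∈ ⟨ω_{μ̄}⟩`; (5) the index of
`⟨ω_{μ̄}⟩` in `G` equals the number of vertices in the orbit of `μ`. -/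



theorem associated_weighting_properties {G : Type} [CommGroup G] [Fintype G]
    (Γ : BrauerGraph) (A : BrauerAction G Γ) (hfree : A.IsFree)
    (rep : Quotient A.orbSetoid → Γ.H)
    (hrep : ∀ q, Quotient.mk A.orbSetoid (rep q) = q)
    (W : Quotient A.orbSetoid → G)
    (hWdef : ∀ q, A.e (W q) (rep (Quotient.mk A.orbSetoid (Γ.σ (rep q)))) = Γ.σ (rep q))
    (h : Γ.H) (k s : ℕ) (g : G)
    (hk1 : 1 ≤ k) (hkOrb : A.orbVal (Γ.v h) = k)
    (hseq : (Γ.σ ^ k) h = A.e g h)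
    (hval : Γ.val (Γ.v h) = k * (s + 1)) :
    ∀ ω : G, ω = ∏ t ∈ Finset.range k, W (Quotient.mk A.orbSetoid ((Γ.σ ^ t) h)) →
      g = ω ∧
      orderOf ω = s + 1 ∧
      orderOf ω ∣ A.mbar (Γ.v h) ∧
      (∀ a a' : G, A.vmap a (Γ.v h) = A.vmap a' (Γ.v h) ↔ a * a'⁻¹ ∈ Subgroup.zpowers ω) ∧
      (Subgroup.zpowers ω).index = Nat.card {ν : Γ.V // ∃ a : G, A.vmap a (Γ.v h) = ν} := by
  classical
  intro ω hω
  -- uniqueness of group element from freeness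
  have unique : ∀ {a b : G} {x : Γ.H}, A.e a x = A.e b x → a = b := by
    intro a b x hx
    have h1 : A.e (b⁻¹ * a) x = x := by
      rw [map_mul, Equiv.Perm.mul_apply, hx, ← Equiv.Perm.mul_apply, ← map_mul,
        inv_mul_cancel, map_one, Equiv.Perm.one_apply]
    have h2 := hfree _ _ h1
    rw [inv_mul_eq_one] at h2
    exact h2.symm
  have commz := A.e_comm_zpow
  have commn := A.e_comm_pow
  have hzz : ∀ (a b : ℤ) (x : Γ.H), (Γ.σ ^ a) ((Γ.σ ^ b) x) = (Γ.σ ^ (a + b)) x := by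
    intro a b x; rw [← Equiv.Perm.mul_apply, ← zpow_add]
  have hk0 : 0 < k := hk1
  -- powers at h
  have hstepN : ∀ n : ℕ, (Γ.σ ^ (k * n)) h = A.e (g ^ n) h := by
    intro n
    induction n with
    | zero => simp
    | succ n ih =>
      have e1 : (Γ.σ ^ (k * (n + 1))) h = (Γ.σ ^ (k * n)) ((Γ.σ ^ k) h) := by
        rw [← Equiv.Perm.mul_apply, ← pow_add, Nat.mul_succ]
      rw [e1, hseq, ← commn, ih, ← Equiv.Perm.mul_apply, ← map_mul, ← pow_succ']
  have hneg : (Γ.σ ^ (-(k : ℤ))) h = A.e g⁻¹ h := by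
    have e1 : (Γ.σ ^ (-(k : ℤ))) ((Γ.σ ^ ((k : ℕ) : ℤ)) h) = h := by
      rw [hzz]; simp
    rw [zpow_natCast, hseq, ← commz] at e1
    -- e1 : A.e g ((Γ.σ ^ (-(k:ℤ))) h) = h
    have := congrArg (A.e g⁻¹) e1
    rwa [← Equiv.Perm.mul_apply, ← map_mul, inv_mul_cancel, map_one,
      Equiv.Perm.one_apply] at this
  have hstepZ : ∀ n : ℤ, (Γ.σ ^ ((k : ℤ) * n)) h = A.e (g ^ n) h := by
    intro n
    induction n using Int.induction_on with
    | zero => simp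
    | succ n ih =>
      have e1 : (k : ℤ) * ((n : ℤ) + 1) = (k : ℤ) + (k : ℤ) * n := by ring
      have e2 : g ^ ((n : ℤ) + 1) = g ^ (n : ℤ) * g := by rw [zpow_add_one]
      rw [e1, ← hzz, ih, ← commz, zpow_natCast Γ.σ k, hseq, ← Equiv.Perm.mul_apply, ← map_mul, e2]
    | pred n ih =>
      have e1 : (k : ℤ) * (-(n : ℤ) - 1) = -(k : ℤ) + (k : ℤ) * (-(n : ℤ)) := by ring
      have e2 : g ^ (-(n : ℤ) - 1) = g ^ (-(n : ℤ)) * g⁻¹ := by rw [zpow_sub_one]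
      rw [e1, ← hzz, ih, ← commz, hneg, ← Equiv.Perm.mul_apply, ← map_mul, e2]
  -- the minimal period of σ at h is k*(s+1)
  have hper : h ∈ Function.periodicPts (⇑Γ.σ) := by
    refine Function.mk_mem_periodicPts (n := orderOf Γ.σ) (orderOf_pos Γ.σ) ?_
    show (⇑Γ.σ)^[orderOf Γ.σ] h = h
    rw [Equiv.Perm.iterate_eq_pow, pow_orderOf_eq_one, Equiv.Perm.one_apply]
  have hPpos : 0 < Function.minimalPeriod (⇑Γ.σ) h :=
    Function.minimalPeriod_pos_of_mem_periodicPts hper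
  have vfibz : ∀ n : ℤ, Γ.v ((Γ.σ ^ n) h) = Γ.v h := by
    intro n
    refine (Γ.v_eq_iff _ _).mpr ⟨-n, ?_⟩
    rw [hzz]; simp
  have vfib : ∀ t : ℕ, Γ.v ((Γ.σ ^ t) h) = Γ.v h := by
    intro t; have := vfibz (t : ℤ); rwa [zpow_natCast] at this
  have hcard : Nat.card {x : Γ.H // Γ.v x = Γ.v h} = Function.minimalPeriod (⇑Γ.σ) h := by
    set P := Function.minimalPeriod (⇑Γ.σ) h with hPdef
    have hbij : Function.Bijective
        (fun t : Fin P => (⟨(Γ.σ ^ (t : ℕ)) h, vfib t⟩ : {x : Γ.H // Γ.v x = Γ.v h})) := by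
      constructor
      · intro t u htu
        have h1 : (⇑Γ.σ)^[(t : ℕ)] h = (⇑Γ.σ)^[(u : ℕ)] h := by
          rw [Equiv.Perm.iterate_eq_pow, Equiv.Perm.iterate_eq_pow]
          exact congrArg Subtype.val htu
        exact Fin.ext (Function.iterate_injOn_Iio_minimalPeriod t.2 u.2 h1)
      · rintro ⟨x, hx⟩
        obtain ⟨n, hn⟩ := (Γ.v_eq_iff x h).mp hx
        have hx2 : (Γ.σ ^ (-n)) h = x := by
          rw [← hn, hzz]; simp
        obtain ⟨m, hm⟩ : ∃ m : ℕ, (Γ.σ ^ (-n)) h = (Γ.σ ^ m) h := by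
          refine ⟨((-n) % ((orderOf Γ.σ : ℕ) : ℤ)).toNat, ?_⟩
          have ho : (0 : ℤ) < ((orderOf Γ.σ : ℕ) : ℤ) := by
            exact_mod_cast orderOf_pos Γ.σ
          have h0 : Γ.σ ^ (((-n) % ((orderOf Γ.σ : ℕ) : ℤ)).toNat : ℤ) = Γ.σ ^ (-n) := by
            rw [Int.toNat_of_nonneg (Int.emod_nonneg _ (by omega))]
            exact zpow_mod_orderOf Γ.σ (-n)
          rw [← zpow_natCast Γ.σ (((-n) % ((orderOf Γ.σ : ℕ) : ℤ)).toNat), h0]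
        refine ⟨⟨m % P, Nat.mod_lt _ hPpos⟩, ?_⟩
        apply Subtype.ext
        show (Γ.σ ^ (m % P)) h = x
        have h1 : (⇑Γ.σ)^[m % P] h = (⇑Γ.σ)^[m] h := Function.iterate_mod_minimalPeriod_eq
        rw [Equiv.Perm.iterate_eq_pow, Equiv.Perm.iterate_eq_pow] at h1
        rw [h1, ← hm, hx2]
    have := Nat.card_eq_of_bijective _ hbij
    simpa using this.symm
  have hP : Function.minimalPeriod (⇑Γ.σ) h = k * (s + 1) := by
    have hvaldef : Γ.val (Γ.v h) = Nat.card {x : Γ.H // Γ.v x = Γ.v h} := rfl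
    rw [← hcard, ← hvaldef]
    exact hval
  have hfix : (Γ.σ ^ (k * (s + 1))) h = h := by
    have h1 := Function.iterate_minimalPeriod (f := ⇑Γ.σ) (x := h)
    rw [Equiv.Perm.iterate_eq_pow, hP] at h1
    exact h1
  have hdvd : ∀ n : ℕ, (Γ.σ ^ n) h = h → k * (s + 1) ∣ n := by
    intro n hn
    have h1 : Function.IsPeriodicPt (⇑Γ.σ) n h := by
      show (⇑Γ.σ)^[n] h = h
      rw [Equiv.Perm.iterate_eq_pow]; exact hn
    have h2 := h1.minimalPeriod_dvd
    rwa [hP] at h2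
  -- order of g
  have hg1 : g ^ (s + 1) = 1 := by
    have h1 := hstepN (s + 1)
    rw [hfix] at h1
    exact hfree _ _ h1.symm
  have hordg : orderOf g = s + 1 := by
    have d1 : orderOf g ∣ s + 1 := orderOf_dvd_of_pow_eq_one hg1
    have d2 : (s + 1) ∣ orderOf g := by
      have hgo : (Γ.σ ^ (k * orderOf g)) h = h := by
        rw [hstepN, pow_orderOf_eq_one, map_one, Equiv.Perm.one_apply]
      have h3 := hdvd _ hgo
      exact (mul_dvd_mul_iff_left (by omega : k ≠ 0)).mp h3
    exact Nat.dvd_antisymm d1 d2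
  -- the k orbit-classes of σ^t h, t < k, exhaust the orbit classes at v h
  have hPred : ∀ t : ℕ, ∃ a : G, Γ.v (A.e a ((Γ.σ ^ t) h)) = Γ.v h := by
    intro t
    exact ⟨1, by rw [map_one, Equiv.Perm.one_apply]; exact vfib t⟩
  set S := A.subOrbSetoid (fun x => ∃ a : G, Γ.v (A.e a x) = Γ.v h) with hSdef
  set φ : Fin k → Quotient S := fun t =>
    Quotient.mk S ⟨(Γ.σ ^ (t : ℕ)) h, hPred t⟩ with hφdef
  have hσdec : ∀ n : ℤ, (Γ.σ ^ n) h = A.e (g ^ (n / (k : ℤ))) ((Γ.σ ^ (n % (k : ℤ))) h) := by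
    intro n
    have e1 : n = (n % (k : ℤ)) + (k : ℤ) * (n / (k : ℤ)) := by
      have := Int.mul_ediv_add_emod n (k : ℤ); omega
    calc (Γ.σ ^ n) h = (Γ.σ ^ ((n % (k : ℤ)) + (k : ℤ) * (n / (k : ℤ)))) h := by rw [← e1]
      _ = (Γ.σ ^ (n % (k : ℤ))) ((Γ.σ ^ ((k : ℤ) * (n / (k : ℤ)))) h) := (hzz _ _ _).symm
      _ = (Γ.σ ^ (n % (k : ℤ))) (A.e (g ^ (n / (k : ℤ))) h) := by rw [hstepZ]
      _ = A.e (g ^ (n / (k : ℤ))) ((Γ.σ ^ (n % (k : ℤ))) h) := (commz _ _ _).symm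
  have hmodlt : ∀ n : ℤ, 0 ≤ n % (k : ℤ) ∧ n % (k : ℤ) < k := by
    intro n
    constructor
    · exact Int.emod_nonneg _ (by omega)
    · exact Int.emod_lt_of_pos _ (by omega)
  have hnatz : ∀ n : ℤ, 0 ≤ n → (Γ.σ ^ (n.toNat : ℕ)) h = (Γ.σ ^ n) h := by
    intro n hn
    rw [← zpow_natCast Γ.σ n.toNat, Int.toNat_of_nonneg hn]
  have hφsurj : Function.Surjective φ := by
    intro q
    obtain ⟨⟨x, hx⟩, rfl⟩ := Quotient.exists_rep q
    obtain ⟨a, ha⟩ := hx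
    obtain ⟨n, hn⟩ := (Γ.v_eq_iff (A.e a x) h).mp ha
    have hx2 : A.e a⁻¹ ((Γ.σ ^ (-n)) h) = x := by
      rw [← hn, hzz]
      simp only [neg_add_cancel, zpow_zero, Equiv.Perm.one_apply]
      rw [← Equiv.Perm.mul_apply, ← map_mul, inv_mul_cancel, map_one, Equiv.Perm.one_apply]
    refine ⟨⟨((-n) % (k : ℤ)).toNat, by have := hmodlt (-n); omega⟩, ?_⟩
    apply Quotient.sound
    refine ⟨a⁻¹ * g ^ ((-n) / (k : ℤ)), ?_⟩
    show A.e (a⁻¹ * g ^ ((-n) / (k : ℤ))) ((Γ.σ ^ ((((-n) % (k : ℤ)).toNat : ℕ))) h) = x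
    rw [map_mul, Equiv.Perm.mul_apply, hnatz _ (hmodlt (-n)).1, ← hσdec, hx2]
  haveI : Fintype (Quotient S) := Fintype.ofFinite _
  have hQcard : Fintype.card (Quotient S) = k := by
    have h1 : Nat.card (Quotient S) = k := hkOrb
    rwa [Nat.card_eq_fintype_card] at h1
  have hφbij : Function.Bijective φ :=
    (Fintype.bijective_iff_surjective_and_card φ).mpr ⟨hφsurj, by simp [hQcard]⟩
  -- key characterization
  have hK : ∀ (b : G) (n : ℤ), (Γ.σ ^ n) h = A.e b h → ∃ q : ℤ, b = g ^ q := by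
    intro b n hb
    have h2 : A.e ((g ^ (n / (k : ℤ)))⁻¹ * b) h = (Γ.σ ^ (n % (k : ℤ))) h := by
      rw [map_mul, Equiv.Perm.mul_apply, ← hb, hσdec n, ← Equiv.Perm.mul_apply, ← map_mul,
        inv_mul_cancel, map_one, Equiv.Perm.one_apply]
    have hφeq : φ ⟨(n % (k : ℤ)).toNat, by have := hmodlt n; omega⟩ = φ ⟨0, hk0⟩ := by
      apply Quotient.sound
      refine ⟨b⁻¹ * g ^ (n / (k : ℤ)), ?_⟩
      show A.e (b⁻¹ * g ^ (n / (k : ℤ))) ((Γ.σ ^ (((n % (k : ℤ)).toNat : ℕ))) h)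
          = (Γ.σ ^ (0 : ℕ)) h
      rw [pow_zero, Equiv.Perm.one_apply, hnatz _ (hmodlt n).1, ← h2,
        ← Equiv.Perm.mul_apply, ← map_mul]
      have : b⁻¹ * g ^ (n / (k : ℤ)) * ((g ^ (n / (k : ℤ)))⁻¹ * b) = 1 := by group
      rw [this, map_one, Equiv.Perm.one_apply]
    have h3 := hφbij.1 hφeq
    have h4 : (n % (k : ℤ)).toNat = 0 := by
      have := Fin.mk.injEq ((n % (k : ℤ)).toNat) _ 0 _ ▸ h3
      exact Fin.val_eq_of_eq h3
    have h5 : n % (k : ℤ) = 0 := by have := hmodlt n; omega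
    rw [h5] at h2
    simp only [zpow_zero, Equiv.Perm.one_apply] at h2
    have h6 := hfree _ _ h2
    refine ⟨n / (k : ℤ), ?_⟩
    have : b = g ^ (n / (k : ℤ)) * ((g ^ (n / (k : ℤ)))⁻¹ * b) := by group
    rw [this, h6, mul_one]
  -- (1): g = ω
  have relt : ∀ t : ℕ, ∃ a : G,
      A.e a (rep (Quotient.mk A.orbSetoid ((Γ.σ ^ t) h))) = (Γ.σ ^ t) h := by
    intro t
    exact Quotient.exact (hrep (Quotient.mk A.orbSetoid ((Γ.σ ^ t) h)))
  choose c hc using relt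
  have hchain : ∀ t : ℕ, c (t + 1) = c t * W (Quotient.mk A.orbSetoid ((Γ.σ ^ t) h)) := by
    intro t
    set q := Quotient.mk A.orbSetoid ((Γ.σ ^ t) h) with hq
    have hqs : Quotient.mk A.orbSetoid (Γ.σ (rep q)) =
        Quotient.mk A.orbSetoid ((Γ.σ ^ (t + 1)) h) := by
      apply Quotient.sound
      refine ⟨c t, ?_⟩
      show A.e (c t) (Γ.σ (rep q)) = (Γ.σ ^ (t + 1)) h
      rw [A.comm_σ, hc t, pow_succ', Equiv.Perm.mul_apply]
    have e1 : A.e (c (t + 1)) (rep (Quotient.mk A.orbSetoid ((Γ.σ ^ (t + 1)) h)))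
        = (Γ.σ ^ (t + 1)) h := hc (t + 1)
    have e2 : A.e (c t * W q) (rep (Quotient.mk A.orbSetoid ((Γ.σ ^ (t + 1)) h)))
        = (Γ.σ ^ (t + 1)) h := by
      rw [map_mul, Equiv.Perm.mul_apply, ← hqs, hWdef q, A.comm_σ, hc t, pow_succ',
        Equiv.Perm.mul_apply]
    exact unique (e1.trans e2.symm)
  have hcprod : ∀ t : ℕ,
      c t = c 0 * ∏ j ∈ Finset.range t, W (Quotient.mk A.orbSetoid ((Γ.σ ^ j) h)) := by
    intro t
    induction t with
    | zero => simp
    | succ t ih => rw [hchain t, ih, Finset.prod_range_succ, mul_assoc]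
  have hqk : Quotient.mk A.orbSetoid ((Γ.σ ^ k) h) =
      Quotient.mk A.orbSetoid ((Γ.σ ^ 0) h) := by
    apply Quotient.sound
    refine ⟨g⁻¹, ?_⟩
    show A.e g⁻¹ ((Γ.σ ^ k) h) = (Γ.σ ^ 0) h
    rw [hseq, ← Equiv.Perm.mul_apply, ← map_mul, inv_mul_cancel, map_one]
    simp
  have ekey : A.e (c k) (rep (Quotient.mk A.orbSetoid ((Γ.σ ^ 0) h))) = (Γ.σ ^ k) h := by
    rw [← hqk]; exact hc k
  have ekey2 : A.e (g * c 0) (rep (Quotient.mk A.orbSetoid ((Γ.σ ^ 0) h))) = (Γ.σ ^ k) h := by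
    rw [map_mul, Equiv.Perm.mul_apply, hc 0, hseq]
    simp
  have hgω : g = ω := by
    have h1 : g * c 0 = c k := unique (ekey2.trans ekey.symm)
    rw [hcprod k, ← hω] at h1
    have h2 : g * c 0 = ω * c 0 := h1.trans (mul_comm (c 0) ω)
    exact mul_right_cancel h2
  -- (2)
  have hordω : orderOf ω = s + 1 := by rw [← hgω]; exact hordg
  -- (3)
  have hmbar : A.mbar (Γ.v h) = (s + 1) * Γ.m (Γ.v h) := by
    show Γ.val (Γ.v h) * Γ.m (Γ.v h) / A.orbVal (Γ.v h) = (s + 1) * Γ.m (Γ.v h)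
    rw [hval, hkOrb, mul_assoc, Nat.mul_div_cancel_left _ hk0]
  -- (4)
  have hx₀ : Γ.v ((Γ.v_surj (Γ.v h)).choose) = Γ.v h := (Γ.v_surj (Γ.v h)).choose_spec
  set x₀ := (Γ.v_surj (Γ.v h)).choose with hx₀def
  obtain ⟨n₀, hn₀⟩ := (Γ.v_eq_iff x₀ h).mp hx₀
  have hx₀iff : ∀ b : G, (∃ n : ℤ, (Γ.σ ^ n) x₀ = A.e b x₀) ↔ b ∈ Subgroup.zpowers g := by
    intro b
    constructor
    · rintro ⟨n, hn⟩
      have h1 : (Γ.σ ^ n) h = A.e b h := by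
        rw [← hn₀, commz, ← hn, hzz, hzz, add_comm]
      obtain ⟨q, hq⟩ := hK b n h1
      exact Subgroup.mem_zpowers_iff.mpr ⟨q, hq.symm⟩
    · intro hb
      obtain ⟨q, hq⟩ := Subgroup.mem_zpowers_iff.mp hb
      refine ⟨(k : ℤ) * q, ?_⟩
      have h1 : (Γ.σ ^ ((k : ℤ) * q)) h = A.e b h := by rw [hstepZ, hq]
      have h2 : (Γ.σ ^ n₀) ((Γ.σ ^ ((k : ℤ) * q)) x₀) = (Γ.σ ^ n₀) (A.e b x₀) := by
        rw [← commz, hzz, add_comm n₀ ((k : ℤ) * q), ← hzz, hn₀, h1]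
      exact (Equiv.injective _) h2
  have hvmap : ∀ a : G, A.vmap a (Γ.v h) = Γ.v (A.e a x₀) := fun a => rfl
  have hvm : ∀ a a' : G,
      A.vmap a (Γ.v h) = A.vmap a' (Γ.v h) ↔ a * a'⁻¹ ∈ Subgroup.zpowers ω := by
    intro a a'
    rw [hvmap, hvmap, ← hgω]
    constructor
    · intro hvv
      obtain ⟨n, hn⟩ := (Γ.v_eq_iff _ _).mp hvv
      have h2 : A.e a ((Γ.σ ^ n) x₀) = A.e a (A.e (a⁻¹ * a') x₀) := by
        rw [commz, hn, ← Equiv.Perm.mul_apply, ← map_mul, mul_inv_cancel_left]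
      have h3 : (Γ.σ ^ n) x₀ = A.e (a⁻¹ * a') x₀ := (A.e a).injective h2
      have h4 : a⁻¹ * a' ∈ Subgroup.zpowers g := (hx₀iff _).mp ⟨n, h3⟩
      have h5 : a * a'⁻¹ = (a⁻¹ * a')⁻¹ := by rw [mul_inv_rev, inv_inv, mul_comm]
      rw [h5]
      exact inv_mem h4
    · intro hb
      have h4 : a⁻¹ * a' ∈ Subgroup.zpowers g := by
        have h5 : a⁻¹ * a' = (a * a'⁻¹)⁻¹ := by rw [mul_inv_rev, inv_inv, mul_comm]
        rw [h5]
        exact inv_mem hb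
      obtain ⟨n, h3⟩ := (hx₀iff _).mpr h4
      refine (Γ.v_eq_iff _ _).mpr ⟨n, ?_⟩
      rw [← commz, h3, ← Equiv.Perm.mul_apply, ← map_mul, mul_inv_cancel_left]
  -- (5)
  have h5 : (Subgroup.zpowers ω).index
      = Nat.card {ν : Γ.V // ∃ a : G, A.vmap a (Γ.v h) = ν} := by
    rw [Subgroup.index_eq_card]
    have wd : ∀ (a b : G), (QuotientGroup.leftRel (Subgroup.zpowers ω)).r a b →
        (⟨A.vmap a (Γ.v h), a, rfl⟩ : {ν : Γ.V // ∃ a : G, A.vmap a (Γ.v h) = ν})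
          = ⟨A.vmap b (Γ.v h), b, rfl⟩ := by
      intro a b hab
      have hab : a⁻¹ * b ∈ Subgroup.zpowers ω := QuotientGroup.leftRel_apply.mp hab
      have hmem : a * b⁻¹ ∈ Subgroup.zpowers ω := by
        have h1 : a * b⁻¹ = (a⁻¹ * b)⁻¹ := by rw [mul_inv_rev, inv_inv, mul_comm]
        rw [h1]
        exact inv_mem hab
      exact Subtype.ext ((hvm a b).mpr hmem)
    refine Nat.card_eq_of_bijective (Quotient.lift _ wd) ⟨?_, ?_⟩
    · intro x y
      refine Quotient.inductionOn₂ x y ?_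
      intro a b hab
      have h1 : A.vmap a (Γ.v h) = A.vmap b (Γ.v h) := congrArg Subtype.val hab
      have h2 : a * b⁻¹ ∈ Subgroup.zpowers ω := (hvm a b).mp h1
      apply Quotient.sound
      have h3 : a⁻¹ * b = (a * b⁻¹)⁻¹ := by rw [mul_inv_rev, inv_inv, mul_comm]
      exact QuotientGroup.leftRel_apply.mpr (h3 ▸ inv_mem h2)
    · rintro ⟨ν, a, ha⟩
      exact ⟨Quotient.mk _ a, Subtype.ext ha⟩
  exact ⟨hgω, hordω, by rw [hmbar, hordω]; exact dvd_mul_right _ _, hvm, h5⟩
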